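/- For ρ ∈ (0,1), ρ ≠ 1/2, the point E₀(ρ) = -ρ log(1-ρ) - (1-ρ) log ρ satisfies E₀(ρ) ≥ -φ/2 + log(1+e^φ) where φ = log(ρ/(1-ρ)); that is, E₀(ρ) lies to the right of the maximizer of the function E ↦ S_{ρ,ρ}(E). -/

import Mathlib

theorem stmt_8 (ρ : ℝ) (hρ : ρ ∈ Set.Ioo (0:ℝ) 1) (hρ' : ρ ≠ 1/2)
    (φ : ℝ) (hφ : φ = Real.log (ρ / (1 - ρ))) :
    -ρ * Real.log (1 - ρ) - (1 - ρ) * Real.log ρ ≥ -φ / 2 + Real.log (1 + Real.exp φ) := by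
  obtain ⟨h0, h1⟩ := hρ
  have h1' : 0 < 1 - ρ := by linarith
  have hφ' : φ = Real.log ρ - Real.log (1 - ρ) := by
    rw [hφ, Real.log_div (ne_of_gt h0) (ne_of_gt h1')]
  have hexp : Real.exp φ = ρ / (1 - ρ) := by
    rw [hφ, Real.exp_log (div_pos h0 h1')]
  have hsum : (1 : ℝ) + ρ / (1 - ρ) = 1 / (1 - ρ) := by field_simp; ring
  have hlog : Real.log (1 + Real.exp φ) = -Real.log (1 - ρ) := by
    rw [hexp, hsum, Real.log_div one_ne_zero (ne_of_gt h1'), Real.log_one]; ring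
  rw [hlog, hφ']
  have key : (ρ - 1/2) * (Real.log ρ - Real.log (1 - ρ)) ≥ 0 := by
    rcases lt_or_gt_of_ne hρ' with h | h
    · have : Real.log ρ < Real.log (1 - ρ) := Real.log_lt_log h0 (by linarith)
      nlinarith
    · have : Real.log (1 - ρ) < Real.log ρ := Real.log_lt_log (by linarith) (by linarith)
      nlinarith
  nlinarith [key]
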